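/- Let d ≥ 2, n ≥ 2 and let 𝒜 be an invertible linear map on (ℂᵈ)^{⊗(n−1)} ≅ ℂ^{d^{n−1}}. Let 𝒱 ⊆ (ℂᵈ)^{⊗n} be the orthogonal complement of the span of the vectors (1, α, …, α^{d−1}) ⊗ 𝒜(1, α, α², …, α^{d^{n−1}−1}) over all α ∈ ℂ. Then: (i) dim 𝒱 = (d^{n−1} − 1)(d − 1); (ii) 𝒱 contains no nonzero vector of the form v ⊗ w with v ∈ ℂᵈ (the first tensor factor) and w ∈ (ℂᵈ)^{⊗(n−1)}; in particular 𝒱 contains no nonzero fully product vector, i.e., 𝒱 is a completely entangled subspace of the maximal possible dimension for a GES in (ℂᵈ)^{⊗n}. -/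

import Mathlib

noncomputable section

/-- The base-`d` exponent `c₂d^{n-2} + ⋯ + c_n d⁰` of the string `J` (of length `m`). -/
def baseExp (d m : ℕ) (J : Fin m → Fin d) : ℕ :=
  ∑ t : Fin m, (J t : ℕ) * d ^ (m - 1 - (t : ℕ))

/-- The vectors `(1,α,…,α^{d−1}) ⊗ 𝒜(1,α,α²,…,α^{d^m−1})` spanning `𝒱^⊥`, for `m + 1`
parties each holding a `d`-level system (`𝒜` acts on the last `m` parties). -/
def quditCurve (d m : ℕ) (A : Matrix (Fin m → Fin d) (Fin m → Fin d) ℂ) (α : ℂ) :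
    EuclideanSpace ℂ (Fin (m + 1) → Fin d) :=
  WithLp.toLp 2 (fun f => α ^ ((f 0 : ℕ)) * A.mulVec (fun J => α ^ baseExp d m J) (fun t => f t.succ))

namespace QuditCES

def B (d m : ℕ) : (Fin m → Fin d) ≃ Fin (d ^ m) :=
  (Equiv.arrowCongr Fin.revPerm (Equiv.refl (Fin d))).trans finFunctionFinEquiv

lemma baseExp_eq (d m : ℕ) (J : Fin m → Fin d) : baseExp d m J = (B d m J : ℕ) := by
  have h : (B d m J : ℕ) = ∑ i : Fin m, (J (Fin.rev i) : ℕ) * d ^ (i : ℕ) := by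
    simp [B, finFunctionFinEquiv_apply, Equiv.arrowCongr_apply, Function.comp]
  rw [h, baseExp, ← Equiv.sum_comp Fin.revPerm
    (fun i : Fin m => (J (Fin.rev i) : ℕ) * d ^ (i : ℕ))]
  apply Finset.sum_congr rfl
  intro t _
  have h1 : Fin.rev (Fin.revPerm t) = t := Fin.rev_rev t
  rw [show Fin.revPerm t = Fin.rev t from rfl, Fin.rev_rev]
  congr 2
  rw [Fin.val_rev]
  omega

lemma baseExp_lt (d m : ℕ) (J : Fin m → Fin d) : baseExp d m J < d ^ m := by
  rw [baseExp_eq]; exact (B d m J).isLt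

lemma baseExp_inj (d m : ℕ) : Function.Injective (baseExp d m) := by
  intro J J' h
  rw [baseExp_eq, baseExp_eq] at h
  exact (B d m).injective (Fin.val_injective h)

lemma baseExp_surj (d m k : ℕ) (hk : k < d ^ m) : ∃ J, baseExp d m J = k :=
  ⟨(B d m).symm ⟨k, hk⟩, by rw [baseExp_eq, Equiv.apply_symm_apply]⟩

/-- The coefficient vectors of the polynomial curve. -/
def W (d m : ℕ) (A : Matrix (Fin m → Fin d) (Fin m → Fin d) ℂ) (k : ℕ) :
    EuclideanSpace ℂ (Fin (m + 1) → Fin d) :=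
  WithLp.toLp 2 (fun f => ∑ J : Fin m → Fin d,
    if (f 0 : ℕ) + baseExp d m J = k then A (fun t => f t.succ) J else 0)

lemma W_eq_zero (d m : ℕ) (A : Matrix (Fin m → Fin d) (Fin m → Fin d) ℂ) (k : ℕ)
    (hk : d ^ m + d - 1 ≤ k) : W d m A k = 0 := by
  ext f
  show (∑ J : Fin m → Fin d, if (f 0 : ℕ) + baseExp d m J = k
      then A (fun t => f t.succ) J else 0) = 0
  apply Finset.sum_eq_zero
  intro J _
  rw [if_neg]
  have h1 := baseExp_lt d m J
  have h2 := (f 0).isLt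
  omega

lemma curve_eq_sum (d m : ℕ) (A : Matrix (Fin m → Fin d) (Fin m → Fin d) ℂ) (α : ℂ) :
    quditCurve d m A α
      = ∑ k ∈ Finset.range (d ^ m + d - 1), α ^ k • W d m A k := by
  ext f
  have hmem : ∀ J : Fin m → Fin d,
      (f 0 : ℕ) + baseExp d m J ∈ Finset.range (d ^ m + d - 1) := by
    intro J
    have h1 := baseExp_lt d m J
    have h2 := (f 0).isLt
    simp only [Finset.mem_range]
    omega
  show α ^ ((f 0 : ℕ)) * A.mulVec (fun J => α ^ baseExp d m J) (fun t => f t.succ)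
      = (∑ k ∈ Finset.range (d ^ m + d - 1), α ^ k • W d m A k) f
  have hr : ∀ s : Finset ℕ, (∑ k ∈ s, α ^ k • W d m A k) f
      = ∑ k ∈ s, α ^ k * W d m A k f := by
    intro s
    induction s using Finset.induction with
    | empty => rfl
    | insert a s h ih => rw [Finset.sum_insert h, Finset.sum_insert h, ← ih]; rfl
  rw [hr]
  simp only [W, WithLp.ofLp_toLp, Matrix.mulVec, dotProduct, Finset.mul_sum, mul_ite, mul_zero]
  rw [Finset.sum_comm]
  apply Finset.sum_congr rfl
  intro J _
  rw [Finset.sum_ite_eq (Finset.range (d ^ m + d - 1)) ((f 0 : ℕ) + baseExp d m J)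
    (fun k => α ^ k * A (fun t => f t.succ) J), if_pos (hmem J)]
  rw [pow_add]; ring

open scoped InnerProductSpace in
lemma mem_orth_span_range_iff {E : Type*} [NormedAddCommGroup E] [InnerProductSpace ℂ E]
    {α : Type*} (g : α → E) (ψ : E) :
    ψ ∈ (Submodule.span ℂ (Set.range g))ᗮ ↔ ∀ a, ⟪g a, ψ⟫_ℂ = 0 := by
  constructor
  · intro h a
    exact (Submodule.mem_orthogonal _ ψ).1 h (g a) (Submodule.subset_span ⟨a, rfl⟩)
  · intro h
    rw [Submodule.mem_orthogonal]
    intro u hu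
    induction hu using Submodule.span_induction with
    | mem x hx => obtain ⟨a, rfl⟩ := hx; exact h a
    | zero => exact inner_zero_left ψ
    | add x y _ _ hx hy => rw [inner_add_left, hx, hy, add_zero]
    | smul c x _ hx => rw [inner_smul_left, hx, mul_zero]

open scoped InnerProductSpace in
lemma inner_curve (d m : ℕ) (A : Matrix (Fin m → Fin d) (Fin m → Fin d) ℂ) (α : ℂ)
    (ψ : EuclideanSpace ℂ (Fin (m + 1) → Fin d)) :
    ⟪quditCurve d m A α, ψ⟫_ℂ
      = ∑ k ∈ Finset.range (d ^ m + d - 1),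
          (starRingEnd ℂ α) ^ k * ⟪W d m A k, ψ⟫_ℂ := by
  rw [curve_eq_sum, sum_inner]
  apply Finset.sum_congr rfl
  intro k _
  rw [inner_smul_left, map_pow]

open scoped InnerProductSpace in
lemma mem_orth_iff (d m : ℕ) (A : Matrix (Fin m → Fin d) (Fin m → Fin d) ℂ)
    (ψ : EuclideanSpace ℂ (Fin (m + 1) → Fin d)) :
    ψ ∈ (Submodule.span ℂ (Set.range (quditCurve d m A)))ᗮ
      ↔ ∀ k : ℕ, ⟪W d m A k, ψ⟫_ℂ = 0 := by
  rw [mem_orth_span_range_iff]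
  constructor
  · intro h k
    set a : ℕ → ℂ := fun k => ⟪W d m A k, ψ⟫_ℂ with ha
    set P : Polynomial ℂ :=
      ∑ k ∈ Finset.range (d ^ m + d - 1), Polynomial.C (a k) * Polynomial.X ^ k with hPdef
    have hP : P = 0 := by
      apply Polynomial.zero_of_eval_zero
      intro β
      have hβ := h (starRingEnd ℂ β)
      rw [inner_curve] at hβ
      rw [hPdef]
      simp only [Polynomial.eval_finset_sum, Polynomial.eval_mul, Polynomial.eval_C,
        Polynomial.eval_pow, Polynomial.eval_X]
      rw [← hβ]
      apply Finset.sum_congr rfl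
      intro k _
      rw [Complex.conj_conj]
      ring
    by_cases hk : k < d ^ m + d - 1
    · have hc := congrArg (fun p => Polynomial.coeff p k) hP
      simp only [hPdef, Polynomial.finset_sum_coeff, Polynomial.coeff_C_mul,
        Polynomial.coeff_X_pow, mul_ite, mul_one, mul_zero, Polynomial.coeff_zero] at hc
      rwa [Finset.sum_ite_eq (Finset.range (d ^ m + d - 1)) k a,
        if_pos (Finset.mem_range.2 hk)] at hc
    · rw [W_eq_zero d m A k (by omega), inner_zero_left]
  · intro h α
    rw [inner_curve]
    simp [h]

lemma sum_apply_aux {d m : ℕ} {ι : Type*} (s : Finset ι)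
    (g : ι → EuclideanSpace ℂ (Fin (m + 1) → Fin d)) (f : Fin (m + 1) → Fin d) :
    (∑ k ∈ s, g k) f = ∑ k ∈ s, g k f := by
  classical
  induction s using Finset.induction with
  | empty => rfl
  | insert a s h ih => rw [Finset.sum_insert h, Finset.sum_insert h, ← ih]; rfl

lemma li (d m : ℕ) (hd : 2 ≤ d) (hm : 1 ≤ m)
    (A : Matrix (Fin m → Fin d) (Fin m → Fin d) ℂ) (hA : IsUnit A.det) :
    LinearIndependent ℂ (fun k : Fin (d ^ m + d - 1) => W d m A (k : ℕ)) := by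
  have hdm : d ≤ d ^ m := by
    have : d ^ 1 ≤ d ^ m := Nat.pow_le_pow_right (by omega) hm
    simpa using this
  have hdet : A.det ≠ 0 := hA.ne_zero
  rw [Fintype.linearIndependent_iff]
  intro c hc k
  set c' : ℕ → ℂ := fun k => if h : k < d ^ m + d - 1 then c ⟨k, h⟩ else 0 with hc'
  have hcc : ∀ i : Fin (d ^ m + d - 1), c' (i : ℕ) = c i := by
    intro i; exact dif_pos i.isLt
  have h1 : ∑ k ∈ Finset.range (d ^ m + d - 1), c' k • W d m A k = 0 := by
    rw [← Fin.sum_univ_eq_sum_range (fun k => c' k • W d m A k) (d ^ m + d - 1), ← hc]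
    apply Finset.sum_congr rfl
    intro i _
    rw [hcc]
  have key : ∀ (j : Fin d) (K : Fin m → Fin d),
      A.mulVec (fun J => c' ((j : ℕ) + baseExp d m J)) K = 0 := by
    intro j K
    have h0 : (∑ k ∈ Finset.range (d ^ m + d - 1), c' k • W d m A k) (Fin.cons j K) = 0 := by
      rw [h1]; rfl
    rw [sum_apply_aux] at h0
    have h2 : ∀ k, (c' k • W d m A k) (Fin.cons j K)
        = ∑ J : Fin m → Fin d,
            if (j : ℕ) + baseExp d m J = k then c' k * A K J else 0 := by
      intro k
      show c' k * W d m A k (Fin.cons j K) = _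
      rw [W, WithLp.ofLp_toLp]
      have ht : (fun t : Fin m => (Fin.cons j K : Fin (m + 1) → Fin d) t.succ) = K := by
        funext t; rw [Fin.cons_succ]
      rw [Finset.mul_sum]
      apply Finset.sum_congr rfl
      intro J _
      rw [Fin.cons_zero, ht, mul_ite, mul_zero]
    simp only [h2] at h0
    rw [Finset.sum_comm] at h0
    have h3 : ∀ J : Fin m → Fin d,
        (∑ k ∈ Finset.range (d ^ m + d - 1),
          if (j : ℕ) + baseExp d m J = k then c' k * A K J else 0)
        = c' ((j : ℕ) + baseExp d m J) * A K J := by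
      intro J
      rw [Finset.sum_ite_eq (Finset.range (d ^ m + d - 1)) ((j : ℕ) + baseExp d m J)
        (fun k => c' k * A K J), if_pos]
      rw [Finset.mem_range]
      have := baseExp_lt d m J
      have := j.isLt
      omega
    simp only [h3] at h0
    rw [Matrix.mulVec, dotProduct, ← h0]
    apply Finset.sum_congr rfl
    intro J _
    ring
  have hz : ∀ (j : Fin d) (J : Fin m → Fin d), c' ((j : ℕ) + baseExp d m J) = 0 := by
    intro j J
    have hv : (fun J => c' ((j : ℕ) + baseExp d m J)) = 0 :=
      Matrix.eq_zero_of_mulVec_eq_zero hdet (by funext K; exact key j K)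
    exact congrFun hv J
  have hz0 : ∀ k, k < d ^ m → c' k = 0 := by
    intro k hk
    obtain ⟨J, hJ⟩ := baseExp_surj d m k hk
    have := hz ⟨0, by omega⟩ J
    simpa [hJ] using this
  have hz1 : ∀ k, d - 1 ≤ k → k < d ^ m + d - 1 → c' k = 0 := by
    intro k hk1 hk2
    obtain ⟨J, hJ⟩ := baseExp_surj d m (k - (d - 1)) (by omega)
    have := hz ⟨d - 1, by omega⟩ J
    rw [hJ] at this
    have he : d - 1 + (k - (d - 1)) = k := by omega
    rwa [he] at this
  rw [← hcc k]
  rcases lt_or_ge (k : ℕ) (d ^ m) with h | h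
  · exact hz0 _ h
  · exact hz1 _ (by omega) k.isLt

open scoped InnerProductSpace in
lemma prod_zero (d m : ℕ) (A : Matrix (Fin m → Fin d) (Fin m → Fin d) ℂ) (hA : IsUnit A.det)
    (ψ : EuclideanSpace ℂ (Fin (m + 1) → Fin d))
    (hψ : ∀ k : ℕ, ⟪W d m A k, ψ⟫_ℂ = 0)
    (v : Fin d → ℂ) (w : (Fin m → Fin d) → ℂ)
    (hvw : ∀ f : Fin (m + 1) → Fin d, ψ f = v (f 0) * w (fun t => f t.succ)) : ψ = 0 := by
  set u : (Fin m → Fin d) → ℂ := fun J => ∑ K, (starRingEnd ℂ) (A K J) * w K with hu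
  have hinner : ∀ k : ℕ, ⟪W d m A k, ψ⟫_ℂ
      = ∑ j : Fin d, ∑ J : Fin m → Fin d,
          if (j : ℕ) + baseExp d m J = k then v j * u J else 0 := by
    intro k
    rw [PiLp.inner_apply]
    rw [← Equiv.sum_comp (Fin.consEquiv (fun _ : Fin (m + 1) => Fin d))
        (fun f => (inner ℂ (W d m A k f) (ψ f) : ℂ))]
    rw [Fintype.sum_prod_type]
    apply Finset.sum_congr rfl
    intro j _
    have hK : ∀ K : Fin m → Fin d,
        (inner ℂ (W d m A k ((Fin.consEquiv (fun _ : Fin (m + 1) => Fin d)) (j, K)))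
          (ψ ((Fin.consEquiv (fun _ : Fin (m + 1) => Fin d)) (j, K))) : ℂ)
        = ∑ J : Fin m → Fin d, if (j : ℕ) + baseExp d m J = k
            then (starRingEnd ℂ) (A K J) * (v j * w K) else 0 := by
      intro K
      rw [RCLike.inner_apply', hvw]
      simp only [Fin.consEquiv_apply, W, WithLp.ofLp_toLp, Fin.cons_zero, Fin.cons_succ]
      rw [map_sum, Finset.sum_mul]
      apply Finset.sum_congr rfl
      intro J _
      rw [apply_ite (starRingEnd ℂ), map_zero, ite_mul, zero_mul]
    rw [Finset.sum_congr rfl (fun K _ => hK K), Finset.sum_comm]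
    apply Finset.sum_congr rfl
    intro J _
    by_cases hcond : (j : ℕ) + baseExp d m J = k
    · simp only [hcond, if_true]
      rw [hu, Finset.mul_sum]
      exact Finset.sum_congr rfl (fun K _ => by ring)
    · simp [hcond]
  set p : Polynomial ℂ := ∑ j : Fin d, Polynomial.C (v j) * Polynomial.X ^ (j : ℕ) with hp
  set q : Polynomial ℂ :=
    ∑ J : Fin m → Fin d, Polynomial.C (u J) * Polynomial.X ^ (baseExp d m J) with hq
  have hmul : p * q = ∑ j : Fin d, ∑ J : Fin m → Fin d,
      Polynomial.C (v j * u J) * Polynomial.X ^ ((j : ℕ) + baseExp d m J) := by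
    rw [hp, hq, Finset.sum_mul_sum]
    apply Finset.sum_congr rfl
    intro j _
    apply Finset.sum_congr rfl
    intro J _
    rw [Polynomial.C_mul, pow_add]
    ring
  have hpq : p * q = 0 := by
    apply Polynomial.ext
    intro k
    rw [hmul, Polynomial.coeff_zero]
    have : (∑ j : Fin d, ∑ J : Fin m → Fin d,
        Polynomial.C (v j * u J) * Polynomial.X ^ ((j : ℕ) + baseExp d m J)).coeff k
        = ∑ j : Fin d, ∑ J : Fin m → Fin d,
            if (j : ℕ) + baseExp d m J = k then v j * u J else 0 := by
      simp only [Polynomial.finset_sum_coeff, Polynomial.coeff_C_mul,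
        Polynomial.coeff_X_pow, mul_ite, mul_one, mul_zero]
      apply Finset.sum_congr rfl
      intro j _
      apply Finset.sum_congr rfl
      intro J _
      exact if_congr eq_comm rfl rfl
    rw [this, ← hinner, hψ]
  rcases mul_eq_zero.1 hpq with h0 | h0
  · have hv : ∀ j, v j = 0 := by
      intro j
      have hcj := congrArg (fun r => Polynomial.coeff r (j : ℕ)) h0
      simp only [hp, Polynomial.finset_sum_coeff, Polynomial.coeff_C_mul,
        Polynomial.coeff_X_pow, mul_ite, mul_one, mul_zero, Polynomial.coeff_zero,
        Fin.val_inj] at hcj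
      rwa [Finset.sum_ite_eq Finset.univ j v, if_pos (Finset.mem_univ j)] at hcj
    ext f
    rw [hvw f, hv, zero_mul]
    rfl
  · have hu0 : ∀ J, u J = 0 := by
      intro J
      have hcj := congrArg (fun r => Polynomial.coeff r (baseExp d m J)) h0
      have hiff : ∀ J' : Fin m → Fin d,
          (baseExp d m J = baseExp d m J') = (J = J') := by
        intro J'
        apply propext
        exact ⟨fun h => baseExp_inj d m h, fun h => by rw [h]⟩
      simp only [hq, Polynomial.finset_sum_coeff, Polynomial.coeff_C_mul,
        Polynomial.coeff_X_pow, mul_ite, mul_one, mul_zero, Polynomial.coeff_zero,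
        hiff] at hcj
      rwa [Finset.sum_ite_eq Finset.univ J u, if_pos (Finset.mem_univ J)] at hcj
    have hw : w = 0 := by
      apply Matrix.eq_zero_of_mulVec_eq_zero (M := A.conjTranspose)
      · rw [Matrix.det_conjTranspose]
        exact star_ne_zero.2 hA.ne_zero
      · funext J
        have : A.conjTranspose.mulVec w J = u J := by
          simp [Matrix.mulVec, dotProduct, Matrix.conjTranspose_apply, hu]
        rw [this, hu0]
        rfl
    ext f
    rw [hvw f, hw]
    simp

open scoped InnerProductSpace in
lemma span_eq (d m : ℕ) (A : Matrix (Fin m → Fin d) (Fin m → Fin d) ℂ) :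
    Submodule.span ℂ (Set.range (quditCurve d m A))
      = Submodule.span ℂ
          (Set.range (fun k : Fin (d ^ m + d - 1) => W d m A (k : ℕ))) := by
  have horth : (Submodule.span ℂ (Set.range (quditCurve d m A)))ᗮ
      = (Submodule.span ℂ
          (Set.range (fun k : Fin (d ^ m + d - 1) => W d m A (k : ℕ))))ᗮ := by
    ext ψ
    rw [mem_orth_iff, mem_orth_span_range_iff]
    constructor
    · intro h k
      exact h (k : ℕ)
    · intro h k
      by_cases hk : k < d ^ m + d - 1
      · exact h ⟨k, hk⟩
      · rw [W_eq_zero d m A k (by omega), inner_zero_left]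
  have h2 := congrArg Submodule.orthogonal horth
  rwa [Submodule.orthogonal_orthogonal, Submodule.orthogonal_orthogonal] at h2

end QuditCES

/-- Lemma 1 of the paper: for `d ≥ 2` and `n = m + 1 ≥ 2` parties and any
invertible `𝒜`, the orthocomplement `𝒱` of the span of the vectors
`(1,α,…,α^{d−1}) ⊗ 𝒜(1,α,…,α^{d^{n−1}−1})` has dimension `(d^{n−1} − 1)(d − 1)`, contains
no nonzero vector product across the cut `A₁|A₂⋯A_n`, and in particular contains no
nonzero fully product vector, i.e., it is a CES of the maximal possible GES dimension. -/
theorem qudit_CES_lemma (d m : ℕ) (hd : 2 ≤ d) (hm : 1 ≤ m)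
    (A : Matrix (Fin m → Fin d) (Fin m → Fin d) ℂ) (hA : IsUnit A.det) :
    Module.finrank ℂ
      ((Submodule.span ℂ (Set.range (quditCurve d m A)))ᗮ :
        Submodule ℂ (EuclideanSpace ℂ (Fin (m + 1) → Fin d))) = (d ^ m - 1) * (d - 1) ∧
    (∀ ψ ∈ (Submodule.span ℂ (Set.range (quditCurve d m A)))ᗮ,
      (∃ (v : Fin d → ℂ) (w : (Fin m → Fin d) → ℂ),
        ∀ f : Fin (m + 1) → Fin d, ψ f = v (f 0) * w (fun t => f t.succ)) → ψ = 0) ∧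
    (∀ ψ ∈ (Submodule.span ℂ (Set.range (quditCurve d m A)))ᗮ,
      (∃ vs : Fin (m + 1) → Fin d → ℂ,
        ∀ f : Fin (m + 1) → Fin d, ψ f = ∏ i : Fin (m + 1), vs i (f i)) → ψ = 0) := by
  have hdm : d ≤ d ^ m := by
    have : d ^ 1 ≤ d ^ m := Nat.pow_le_pow_right (by omega) hm
    simpa using this
  refine ⟨?_, ?_, ?_⟩
  · have h1 := Submodule.finrank_add_finrank_orthogonal
      (K := Submodule.span ℂ (Set.range (quditCurve d m A)))
    have h2 : Module.finrank ℂ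
        (Submodule.span ℂ (Set.range (quditCurve d m A))) = d ^ m + d - 1 := by
      rw [QuditCES.span_eq d m A, finrank_span_eq_card (QuditCES.li d m hd hm A hA)]
      simp
    have h3 : Module.finrank ℂ (EuclideanSpace ℂ (Fin (m + 1) → Fin d)) = d ^ (m + 1) := by
      simp [finrank_euclideanSpace]
    obtain ⟨a, ha⟩ : ∃ a, d ^ m = a + 1 := ⟨d ^ m - 1, by omega⟩
    obtain ⟨b, hb⟩ : ∃ b, d = b + 1 := ⟨d - 1, by omega⟩
    have e1 : d ^ (m + 1) = a * b + a + b + 1 := by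
      rw [pow_succ, ha, hb]; ring
    have e3 : (d ^ m - 1) * (d - 1) = a * b := by
      rw [ha, hb]; simp
    rw [e3]
    omega
  · intro ψ hmem h
    obtain ⟨v, w, hvw⟩ := h
    exact QuditCES.prod_zero d m A hA ψ ((QuditCES.mem_orth_iff d m A ψ).1 hmem) v w hvw
  · intro ψ hmem h
    obtain ⟨vs, hvs⟩ := h
    refine QuditCES.prod_zero d m A hA ψ ((QuditCES.mem_orth_iff d m A ψ).1 hmem)
      (vs 0) (fun K => ∏ t : Fin m, vs t.succ (K t)) ?_
    intro f
    rw [hvs f, Fin.prod_univ_succ]
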